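/- arXiv:1802.00501 — 3 statements merged into one kernel-verified Lean document; each statement's English description precedes it below -/
import Mathlib

section
/- Let W : ℝ → ℝ be continuous with W(x) → -∞ as |x| → ∞ and sup W < 0. Then the Hilbert space V = H¹(ℝ) ∩ L²_{-W}(ℝ), with norm ‖v‖_V² = ∫ |v'|² + ∫ (-W) v², embeds compactly into L²(ℝ): every bounded sequence in V has a subsequence converging in L²(ℝ). -/
open MeasureTheory Filter Topology
open scoped ENNReal NNReal

lemma aux_intint {f : ℝ → ℝ} (hf : Differentiable ℝ f)
    (hf' : Integrable (fun x => deriv f x ^ 2)) (x y : ℝ) (hxy : x ≤ y) :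
    IntervalIntegrable (deriv f) volume x y := by
  rw [intervalIntegrable_iff_integrableOn_Ioc_of_le hxy]
  have hmeas : Measurable (deriv f) := measurable_deriv f
  refine Integrable.mono' (g := fun t => 1 + deriv f t ^ 2)
    (show IntegrableOn (fun t => 1 + deriv f t ^ 2) (Set.Ioc x y) volume from (integrableOn_const measure_Ioc_lt_top.ne : IntegrableOn (fun _ => (1:ℝ)) (Set.Ioc x y) volume).add
    hf'.integrableOn) hmeas.aestronglyMeasurable.restrict ?_
  filter_upwards with t
  have : |deriv f t| ≤ 1 + deriv f t ^ 2 := by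
    nlinarith [abs_nonneg (deriv f t), sq_abs (deriv f t), sq_nonneg (|deriv f t| - 1)]
  simpa using this

lemma aux_holder {f : ℝ → ℝ} (hf : Differentiable ℝ f)
    (hf' : Integrable (fun x => deriv f x ^ 2)) {A : ℝ} (hA : 0 < A)
    (hbA : ∫ x, deriv f x ^ 2 ≤ A) {x y : ℝ} (hxy : x ≤ y) :
    |f y - f x| ≤ Real.sqrt (y - x) * Real.sqrt A := by
  rcases eq_or_lt_of_le hxy with rfl | hlt
  · simp [Real.sqrt_nonneg, mul_nonneg]
  set s := Real.sqrt (A / (y - x)) with hs_def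
  have hyx : (0:ℝ) < y - x := by linarith
  have hs : 0 < s := Real.sqrt_pos.2 (div_pos hA hyx)
  have hftc : f y - f x = ∫ t in x..y, deriv f t :=
    (intervalIntegral.integral_deriv_eq_sub (fun t _ => hf t)
      (aux_intint hf hf' x y hxy)).symm
  have hint : IntervalIntegrable (deriv f) volume x y := aux_intint hf hf' x y hxy
  have hint2 : IntervalIntegrable (fun t => (s + deriv f t ^ 2 / s) / 2) volume x y := by
    exact (intervalIntegrable_const.add (hf'.intervalIntegrable.div_const s)).div_const 2
  have habs : |∫ t in x..y, deriv f t| ≤ ∫ t in x..y, (s + deriv f t ^ 2 / s) / 2 := by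
    refine (intervalIntegral.abs_integral_le_integral_abs hxy).trans ?_
    apply intervalIntegral.integral_mono_on hxy hint.abs hint2
    intro t _
    have hu : (deriv f t ^ 2 / s) * s = deriv f t ^ 2 := by field_simp
    nlinarith [sq_nonneg (s - |deriv f t|), sq_abs (deriv f t), hs, abs_nonneg (deriv f t)]
  have hd2 : ∫ t in x..y, deriv f t ^ 2 ≤ A := by
    rw [intervalIntegral.integral_of_le hxy]
    refine le_trans (setIntegral_le_integral hf' ?_) hbA
    filter_upwards with t using sq_nonneg _
  have hd2nn : 0 ≤ ∫ t in x..y, deriv f t ^ 2 := by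
    rw [intervalIntegral.integral_of_le hxy]
    exact setIntegral_nonneg measurableSet_Ioc fun t _ => sq_nonneg _
  have hsplit : (∫ t in x..y, (s + deriv f t ^ 2 / s) / 2)
      = ((y - x) * s + (∫ t in x..y, deriv f t ^ 2) / s) / 2 := by
    rw [intervalIntegral.integral_div, intervalIntegral.integral_add intervalIntegrable_const
      (hf'.intervalIntegrable.div_const s), intervalIntegral.integral_const,
      intervalIntegral.integral_div]
    simp [smul_eq_mul]
  have hfin : ((y - x) * s + A / s) / 2 = Real.sqrt (y - x) * Real.sqrt A := by
    have e1 : Real.sqrt (y - x) ^ 2 = y - x := Real.sq_sqrt hyx.le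
    have e2 : Real.sqrt A ^ 2 = A := Real.sq_sqrt hA.le
    have h1 : (0:ℝ) < Real.sqrt (y - x) := Real.sqrt_pos.2 hyx
    have h2 : (0:ℝ) < Real.sqrt A := Real.sqrt_pos.2 hA
    rw [hs_def, Real.sqrt_div hA.le, show y - x = Real.sqrt (y-x) ^ 2 from e1.symm,
      show A = Real.sqrt A ^ 2 from e2.symm]
    rw [Real.sqrt_sq h1.le, Real.sqrt_sq h2.le]
    field_simp
    ring
  calc |f y - f x| = |∫ t in x..y, deriv f t| := by rw [hftc]
    _ ≤ ∫ t in x..y, (s + deriv f t ^ 2 / s) / 2 := habs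
    _ = ((y - x) * s + (∫ t in x..y, deriv f t ^ 2) / s) / 2 := hsplit
    _ ≤ ((y - x) * s + A / s) / 2 := by gcongr
    _ = Real.sqrt (y - x) * Real.sqrt A := hfin

lemma aux_ptbound{f : ℝ → ℝ} (hf : Differentiable ℝ f)
    (hf' : Integrable (fun x => deriv f x ^ 2))
    (hf2 : Integrable (fun x => f x ^ 2)) {A D : ℝ} (hA : 0 < A)
    (hbA : ∫ x, deriv f x ^ 2 ≤ A) (hbD : ∫ x, f x ^ 2 ≤ D) (x : ℝ) :
    |f x| ≤ Real.sqrt (D + 1) + Real.sqrt A := by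
  obtain ⟨y, hy, hfy⟩ : ∃ y ∈ Set.Ioc (x - 1) x, f y ^ 2 ≤ D + 1 := by
    by_contra h
    push_neg at h
    have h1 : (D + 1) * (volume (Set.Ioc (x - 1) x)).toReal
        ≤ ∫ y in Set.Ioc (x - 1) x, f y ^ 2 :=
      setIntegral_ge_of_const_le_real measurableSet_Ioc measure_Ioc_lt_top.ne
        (fun y hy => (h y hy).le) hf2.integrableOn
    have h2 : ∫ y in Set.Ioc (x - 1) x, f y ^ 2 ≤ D := by
      refine le_trans (setIntegral_le_integral hf2 ?_) hbD
      filter_upwards with t using sq_nonneg _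
    rw [Real.volume_Ioc] at h1
    simp only [show x - (x - 1) = 1 by ring, ENNReal.ofReal_one, ENNReal.toReal_one,
      mul_one] at h1
    linarith
  have h3 : |f x - f y| ≤ Real.sqrt (x - y) * Real.sqrt A := aux_holder hf hf' hA hbA hy.2
  have h4 : Real.sqrt (x - y) ≤ 1 := by
    rw [show (1:ℝ) = Real.sqrt 1 by simp]
    exact Real.sqrt_le_sqrt (by linarith [hy.1])
  have h5 : |f y| ≤ Real.sqrt (D + 1) := by
    rw [← Real.sqrt_sq_eq_abs]
    exact Real.sqrt_le_sqrt hfy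
  calc |f x| ≤ |f x - f y| + |f y| := by
        have := abs_sub_abs_le_abs_sub (f x) (f y); linarith [abs_sub_abs_le_abs_sub (f x) (f y)]
    _ ≤ Real.sqrt (x - y) * Real.sqrt A + Real.sqrt (D + 1) := by gcongr
    _ ≤ 1 * Real.sqrt A + Real.sqrt (D + 1) := by gcongr
    _ = Real.sqrt (D + 1) + Real.sqrt A := by ring

lemma aux_elpnorm{h : ℝ → ℝ} {b : ℝ} (hb : 0 ≤ b)
    (hint : ∫⁻ x, ENNReal.ofReal (h x ^ 2) ≤ ENNReal.ofReal b) :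
    eLpNorm h 2 volume ≤ ENNReal.ofReal (Real.sqrt b) := by
  rw [eLpNorm_eq_lintegral_rpow_enorm_toReal (by norm_num) (by norm_num)]
  have h2 : (2 : ℝ≥0∞).toReal = (2:ℝ) := by norm_num
  rw [h2]
  have h1 : ∀ x : ℝ, ‖h x‖ₑ ^ (2:ℝ) = ENNReal.ofReal (h x ^ 2) := by
    intro x
    rw [Real.enorm_eq_ofReal_abs,
      ENNReal.ofReal_rpow_of_nonneg (abs_nonneg _) (by norm_num : (0:ℝ) ≤ 2)]
    congr 1
    rw [show (2:ℝ) = ((2:ℕ):ℝ) by norm_num, Real.rpow_natCast, sq_abs]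
  simp only [h1]
  calc (∫⁻ x, ENNReal.ofReal (h x ^ 2)) ^ (1 / (2:ℝ))
      ≤ (ENNReal.ofReal b) ^ (1 / (2:ℝ)) := by gcongr
    _ = ENNReal.ofReal (Real.sqrt b) := by
        rw [ENNReal.ofReal_rpow_of_nonneg hb (by norm_num : (0:ℝ) ≤ 1/2), Real.sqrt_eq_rpow]

lemma aux_limit (u : ℕ → ℝ → ℝ) (hcont : ∀ n, Continuous (u n)) (C M' : ℝ) (hM' : 0 < M')
    (hpt : ∀ n x, |u n x| ≤ C)
    (hHol : ∀ n {x y : ℝ}, x ≤ y → |u n y - u n x| ≤ Real.sqrt (y - x) * Real.sqrt M')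
    (hQ : ∀ q : ℚ, CauchySeq fun n => u n (q:ℝ)) :
    ∃ g : ℝ → ℝ, (∀ x, Tendsto (fun n => u n x) atTop (𝓝 (g x))) ∧ Measurable g
      ∧ ∀ x, |g x| ≤ C := by
  have hCauchy : ∀ x : ℝ, CauchySeq (fun n => u n x) := by
    intro x
    rw [Metric.cauchySeq_iff]
    intro ε hε
    set t := ε / (4 * (Real.sqrt M' + 1)) with htdef
    have ht : 0 < t := by positivity
    obtain ⟨q, hq1, hq2⟩ := exists_rat_btwn (show x < x + t^2 by nlinarith)
    have hqb : ∀ n, |u n q - u n x| ≤ ε / 4 := by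
      intro n
      calc |u n q - u n x| ≤ Real.sqrt ((q:ℝ) - x) * Real.sqrt M' := hHol n hq1.le
        _ ≤ t * Real.sqrt M' := by
            gcongr
            rw [show t = Real.sqrt (t^2) from (Real.sqrt_sq ht.le).symm]
            exact Real.sqrt_le_sqrt (by linarith)
        _ ≤ t * (Real.sqrt M' + 1) := by nlinarith [Real.sqrt_nonneg M']
        _ = ε / 4 := by rw [htdef]; field_simp
    obtain ⟨N, hN⟩ := Metric.cauchySeq_iff.1 (hQ q) (ε/4) (by linarith)
    refine ⟨N, fun m hm n hn => ?_⟩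
    have h1 := hqb m
    have h2 := hqb n
    have h3 := hN m hm n hn
    rw [Real.dist_eq] at h3 ⊢
    have : u m x - u n x = -(u m q - u m x) + (u m q - u n q) + (u n q - u n x) := by ring
    calc |u m x - u n x| ≤ |u m q - u m x| + |u m q - u n q| + |u n q - u n x| := by
          rw [this]; exact le_trans (abs_add_le _ _) (by gcongr; exact le_trans (abs_add_le _ _) (by simp [abs_sub_comm]))
      _ < ε := by linarith
  have hglim : ∀ x, ∃ l, Tendsto (fun n => u n x) atTop (𝓝 l) :=
    fun x => cauchySeq_tendsto_of_complete (hCauchy x)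
  choose g hg using hglim
  refine ⟨g, hg, ?_, ?_⟩
  · exact measurable_of_tendsto_metrizable (fun n => (hcont n).measurable)
      (tendsto_pi_nhds.2 hg)
  · intro x
    have h1 : Tendsto (fun n => |u n x|) atTop (𝓝 |g x|) := (hg x).abs
    exact le_of_tendsto h1 (Eventually.of_forall fun n => hpt n x)

lemma aux_final (u : ℕ → ℝ → ℝ) (hcont : ∀ n, Continuous (u n))
    (hsq : ∀ n, Integrable (fun x => u n x ^ 2))
    (D : ℝ) (hD : 0 ≤ D) (hL2 : ∀ n, ∫ x, u n x ^ 2 ≤ D)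
    (C : ℝ) (hCnn : 0 ≤ C) (hpt : ∀ n x, |u n x| ≤ C)
    (htail : ∀ ε : ℝ, 0 < ε → ∃ R : ℝ, 0 < R ∧
      ∀ n, ∫ x in {x : ℝ | R ≤ |x|}, u n x ^ 2 ≤ ε)
    (g : ℝ → ℝ) (hgmeas : Measurable g)
    (hg : ∀ x, Tendsto (fun n => u n x) atTop (𝓝 (g x)))
    (hgbd : ∀ x, |g x| ≤ C) :
    MemLp g 2 volume ∧
      Tendsto (fun n => eLpNorm (fun x => u n x - g x) 2 volume) atTop (𝓝 0) := by
  have humeas : ∀ n, Measurable fun x => ENNReal.ofReal (u n x ^ 2) :=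
    fun n => (((hcont n).pow 2).measurable).ennreal_ofReal
  -- Fatou-type bound for g on any measurable set
  have key : ∀ s : Set ℝ, ∀ b : ℝ, (∀ n, ∫ x in s, u n x ^ 2 ≤ b) →
      ∫⁻ x in s, ENNReal.ofReal (g x ^ 2) ≤ ENNReal.ofReal b := by
    intro s b hb
    have h1 : ∀ x : ℝ, Tendsto (fun n => ENNReal.ofReal (u n x ^ 2)) atTop
        (𝓝 (ENNReal.ofReal (g x ^ 2))) :=
      fun x => (ENNReal.continuous_ofReal.tendsto _).comp ((hg x).pow 2)
    calc ∫⁻ x in s, ENNReal.ofReal (g x ^ 2)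
        = ∫⁻ x in s, Filter.liminf (fun n => ENNReal.ofReal (u n x ^ 2)) atTop :=
          lintegral_congr fun x => ((h1 x).liminf_eq).symm
      _ ≤ Filter.liminf (fun n => ∫⁻ x in s, ENNReal.ofReal (u n x ^ 2)) atTop :=
          lintegral_liminf_le fun n => humeas n
      _ ≤ ENNReal.ofReal b := by
          refine liminf_le_of_frequently_le' (Frequently.of_forall fun n => ?_)
          rw [← ofReal_integral_eq_lintegral_ofReal ((hsq n).integrableOn)
            (Eventually.of_forall fun x => sq_nonneg _)]
          exact ENNReal.ofReal_le_ofReal (hb n)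
  have hgsqint : ∫⁻ x, ENNReal.ofReal (g x ^ 2) ≤ ENNReal.ofReal D := by
    have := key Set.univ D (fun n => by rw [setIntegral_univ]; exact hL2 n)
    rwa [Measure.restrict_univ] at this
  have hgmem : MemLp g 2 volume := by
    refine ⟨hgmeas.aestronglyMeasurable, ?_⟩
    exact lt_of_le_of_lt (aux_elpnorm hD hgsqint) ENNReal.ofReal_lt_top
  refine ⟨hgmem, ?_⟩
  rw [ENNReal.tendsto_atTop_zero]
  intro ε hε
  obtain ⟨δ, hδ, hδε⟩ : ∃ δ : ℝ, 0 < δ ∧ ENNReal.ofReal (Real.sqrt δ) ≤ ε := by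
    rcases eq_or_ne ε ⊤ with rfl | hne
    · exact ⟨1, one_pos, le_top⟩
    · have h0 : 0 < ε.toReal := ENNReal.toReal_pos hε.ne' hne
      refine ⟨(min 1 (ε.toReal / 2)) ^ 2, by positivity, ?_⟩
      rw [Real.sqrt_sq (by positivity)]
      calc ENNReal.ofReal (min 1 (ε.toReal / 2)) ≤ ENNReal.ofReal ε.toReal :=
            ENNReal.ofReal_le_ofReal (le_trans (min_le_right _ _) (by linarith))
        _ = ε := ENNReal.ofReal_toReal hne
  set ε' := δ / 5 with hε'def
  have hε' : 0 < ε' := by positivity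
  obtain ⟨R, hR, hRtail⟩ := htail ε' hε'
  set s : Set ℝ := {x : ℝ | R ≤ |x|} with hsdef
  have hset : MeasurableSet s := measurableSet_le measurable_const continuous_abs.measurable
  have hvolt : volume sᶜ < ⊤ := by
    refine lt_of_le_of_lt (measure_mono ?_) (measure_Ioo_lt_top (a := -R) (b := R))
    intro x hx
    simp only [hsdef, Set.mem_compl_iff, Set.mem_setOf_eq, not_le] at hx
    exact Set.mem_Ioo.2 (abs_lt.1 hx)
  have hgtail : ∫⁻ x in s, ENNReal.ofReal (g x ^ 2) ≤ ENNReal.ofReal ε' :=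
    key s ε' hRtail
  have hutail : ∀ n, ∫⁻ x in s, ENNReal.ofReal (u n x ^ 2) ≤ ENNReal.ofReal ε' := by
    intro n
    rw [← ofReal_integral_eq_lintegral_ofReal ((hsq n).integrableOn)
      (Eventually.of_forall fun x => sq_nonneg _)]
    exact ENNReal.ofReal_le_ofReal (hRtail n)
  have hdiffmeas : ∀ n, Measurable fun x => (u n x - g x) ^ 2 :=
    fun n => ((hcont n).measurable.sub hgmeas).pow_const 2
  -- tail bound for the differences
  have htailbound : ∀ n, ∫⁻ x in s, ENNReal.ofReal ((u n x - g x) ^ 2)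
      ≤ ENNReal.ofReal (4 * ε') := by
    intro n
    have hptw : ∀ x, ENNReal.ofReal ((u n x - g x) ^ 2)
        ≤ 2 * ENNReal.ofReal (u n x ^ 2) + 2 * ENNReal.ofReal (g x ^ 2) := by
      intro x
      calc ENNReal.ofReal ((u n x - g x) ^ 2)
          ≤ ENNReal.ofReal (2 * u n x ^ 2 + 2 * g x ^ 2) :=
            ENNReal.ofReal_le_ofReal (by nlinarith [sq_nonneg (u n x + g x)])
        _ ≤ ENNReal.ofReal (2 * u n x ^ 2) + ENNReal.ofReal (2 * g x ^ 2) :=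
            ENNReal.ofReal_add_le
        _ = 2 * ENNReal.ofReal (u n x ^ 2) + 2 * ENNReal.ofReal (g x ^ 2) := by
            rw [ENNReal.ofReal_mul (by norm_num), ENNReal.ofReal_mul (by norm_num)]
            norm_num
    calc ∫⁻ x in s, ENNReal.ofReal ((u n x - g x) ^ 2)
        ≤ ∫⁻ x in s, (2 * ENNReal.ofReal (u n x ^ 2) + 2 * ENNReal.ofReal (g x ^ 2)) :=
          lintegral_mono hptw
      _ = 2 * (∫⁻ x in s, ENNReal.ofReal (u n x ^ 2))
          + 2 * ∫⁻ x in s, ENNReal.ofReal (g x ^ 2) := by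
          rw [lintegral_add_left ((humeas n).const_mul 2),
            lintegral_const_mul 2 (humeas n),
            lintegral_const_mul 2 (hgmeas.pow_const 2).ennreal_ofReal]
      _ ≤ 2 * ENNReal.ofReal ε' + 2 * ENNReal.ofReal ε' :=
          add_le_add (mul_le_mul_right (hutail n) 2) (mul_le_mul_right hgtail 2)
      _ = ENNReal.ofReal (4 * ε') := by
          rw [show (4:ℝ) * ε' = 2 * ε' + 2 * ε' by ring,
            ENNReal.ofReal_add (by positivity) (by positivity),
            ENNReal.ofReal_mul (by norm_num)]
          norm_num
  -- interior: dominated convergence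
  have hintDCT : Tendsto (fun n => ∫ x in sᶜ, (u n x - g x) ^ 2) atTop (𝓝 0) := by
    have h0 : (0:ℝ) = ∫ x in sᶜ, (0:ℝ) := by simp
    rw [h0]
    refine tendsto_integral_of_dominated_convergence (fun _ => (2*C)^2)
      (fun n => (hdiffmeas n).aestronglyMeasurable) ?_ ?_ ?_
    · exact integrableOn_const hvolt.ne
    · intro n
      filter_upwards with x
      rw [Real.norm_eq_abs, abs_of_nonneg (sq_nonneg _)]
      nlinarith [hpt n x, hgbd x, abs_nonneg (u n x), abs_nonneg (g x),
        sq_abs (u n x), sq_abs (g x), abs_sub (u n x) (g x), sq_nonneg (|u n x| + |g x|),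
        abs_sub_abs_le_abs_sub (u n x) (g x), abs_abs_sub_abs_le_abs_sub (u n x) (g x),
        abs_le.1 (hpt n x), abs_le.1 (hgbd x), sq_nonneg (u n x - g x)]
    · filter_upwards with x
      have : Tendsto (fun n => (u n x - g x) ^ 2) atTop (𝓝 ((g x - g x) ^ 2)) :=
        ((hg x).sub tendsto_const_nhds).pow 2
      simpa using this
  have hintev : ∀ᶠ n in atTop, ∫ x in sᶜ, (u n x - g x) ^ 2 < ε' :=
    hintDCT.eventually_lt_const hε'
  have hintint : ∀ n, IntegrableOn (fun x => (u n x - g x) ^ 2) sᶜ := by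
    intro n
    refine Integrable.mono' (g := fun _ => (2*C)^2) (integrableOn_const hvolt.ne)
      (hdiffmeas n).aestronglyMeasurable.restrict ?_
    filter_upwards with x
    rw [Real.norm_eq_abs, abs_of_nonneg (sq_nonneg _)]
    nlinarith [abs_le.1 (hpt n x), abs_le.1 (hgbd x)]
  obtain ⟨N, hN⟩ := hintev.exists_forall_of_atTop
  refine ⟨N, fun n hn => ?_⟩
  have hmain : ∫⁻ x, ENNReal.ofReal ((u n x - g x) ^ 2) ≤ ENNReal.ofReal δ := by
    rw [← lintegral_add_compl (fun x => ENNReal.ofReal ((u n x - g x) ^ 2)) hset]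
    have hint2 : ∫⁻ x in sᶜ, ENNReal.ofReal ((u n x - g x) ^ 2) ≤ ENNReal.ofReal ε' := by
      rw [← ofReal_integral_eq_lintegral_ofReal (hintint n)
        (Eventually.of_forall fun x => sq_nonneg _)]
      exact ENNReal.ofReal_le_ofReal (hN n hn).le
    calc (∫⁻ x in s, ENNReal.ofReal ((u n x - g x) ^ 2))
          + ∫⁻ x in sᶜ, ENNReal.ofReal ((u n x - g x) ^ 2)
        ≤ ENNReal.ofReal (4 * ε') + ENNReal.ofReal ε' :=
          add_le_add (htailbound n) hint2
      _ = ENNReal.ofReal δ := by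
          rw [← ENNReal.ofReal_add (by positivity) (by positivity)]
          congr 1
          rw [hε'def]; ring
  exact le_trans (aux_elpnorm hδ.le hmain) hδε

theorem compact_embedding_V_L2
    (W : ℝ → ℝ) (hW : Continuous W) (hWneg : ∃ c > (0 : ℝ), ∀ x, W x ≤ -c)
    (hconf : Tendsto W (Filter.cocompact ℝ) atBot)
    (v : ℕ → ℝ → ℝ) (hdiff : ∀ n, Differentiable ℝ (v n))
    (hv2 : ∀ n, MemLp (v n) 2 volume)
    (hv'2 : ∀ n, Integrable (fun x => deriv (v n) x ^ 2))
    (hvW : ∀ n, Integrable (fun x => (-W x) * v n x ^ 2))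
    (M : ℝ)
    (hbound : ∀ n, (∫ x, deriv (v n) x ^ 2) + (∫ x, (-W x) * v n x ^ 2) ≤ M) :
    ∃ (φ : ℕ → ℕ), StrictMono φ ∧ ∃ g : ℝ → ℝ, MemLp g 2 volume ∧
      Tendsto (fun n => eLpNorm (fun x => v (φ n) x - g x) 2 volume) atTop (𝓝 0) := by
  obtain ⟨c, hc, hWc⟩ := hWneg
  set M' := max M 1 with hM'def
  have hM' : (0:ℝ) < M' := lt_of_lt_of_le one_pos (le_max_right _ _)
  have hBnn : ∀ n, 0 ≤ ∫ x, (-W x) * v n x ^ 2 :=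
    fun n => integral_nonneg fun x => mul_nonneg (by linarith [hWc x]) (sq_nonneg _)
  have hAnn : ∀ n, 0 ≤ ∫ x, deriv (v n) x ^ 2 := fun n => integral_nonneg fun x => sq_nonneg _
  have hA : ∀ n, ∫ x, deriv (v n) x ^ 2 ≤ M' :=
    fun n => le_trans (by linarith [hbound n, hBnn n]) (le_max_left M 1)
  have hB : ∀ n, ∫ x, (-W x) * v n x ^ 2 ≤ M' :=
    fun n => le_trans (by linarith [hbound n, hAnn n]) (le_max_left M 1)
  have hsq : ∀ n, Integrable (fun x => v n x ^ 2) := fun n => (hv2 n).integrable_sq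
  have hL2 : ∀ n, ∫ x, v n x ^ 2 ≤ M' / c := by
    intro n
    rw [le_div_iff₀ hc]
    have h1 : ∫ x, c * v n x ^ 2 ≤ ∫ x, (-W x) * v n x ^ 2 :=
      integral_mono ((hsq n).const_mul c) (hvW n)
        (fun x => mul_le_mul_of_nonneg_right (by linarith [hWc x]) (sq_nonneg _))
    rw [integral_const_mul] at h1
    linarith [hB n]
  set C : ℝ := Real.sqrt (M' / c + 1) + Real.sqrt M' with hCdef
  have hCnn : (0:ℝ) ≤ C := add_nonneg (Real.sqrt_nonneg _) (Real.sqrt_nonneg _)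
  have hpt : ∀ n x, |v n x| ≤ C :=
    fun n x => aux_ptbound (hdiff n) (hv'2 n) (hsq n) hM' (hA n) (hL2 n) x
  have hHol : ∀ n {x y : ℝ}, x ≤ y → |v n y - v n x| ≤ Real.sqrt (y - x) * Real.sqrt M' :=
    fun n _ _ hxy => aux_holder (hdiff n) (hv'2 n) hM' (hA n) hxy
  -- tail estimate
  have htail : ∀ ε : ℝ, 0 < ε → ∃ R : ℝ, 0 < R ∧
      ∀ n, ∫ x in {x : ℝ | R ≤ |x|}, v n x ^ 2 ≤ ε := by
    intro ε hε
    have h1 : ∀ᶠ x in cocompact ℝ, W x ≤ -(M'/ε) := hconf.eventually (eventually_le_atBot _)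
    obtain ⟨K, hK, hKsub⟩ := mem_cocompact.1 h1
    obtain ⟨R0, hR0⟩ := hK.isBounded.subset_closedBall 0
    refine ⟨max R0 0 + 1, by positivity, fun n => ?_⟩
    set R := max R0 0 + 1 with hRdef
    set s : Set ℝ := {x : ℝ | R ≤ |x|} with hsdef
    have hset : MeasurableSet s :=
      measurableSet_le measurable_const continuous_abs.measurable
    have hWx : ∀ x ∈ s, M' / ε ≤ -W x := by
      intro x hx
      have hxK : x ∉ K := by
        intro hxK
        have := hR0 hxK
        simp only [Metric.mem_closedBall, Real.dist_eq, sub_zero] at this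
        have : |x| ≤ R0 := this
        have hxs : R ≤ |x| := hx
        have : R0 ≤ max R0 0 := le_max_left _ _
        linarith
      have := hKsub hxK
      simpa using (by linarith [show W x ≤ -(M'/ε) from this] : M'/ε ≤ -W x)
    have step1 : ∫ x in s, v n x ^ 2 ≤ ∫ x in s, (ε / M') * ((-W x) * v n x ^ 2) := by
      refine setIntegral_mono_on (hsq n).integrableOn
        (((hvW n).const_mul (ε / M')).integrableOn) hset ?_
      intro x hx
      have h2 := hWx x hx
      have h3 : (1:ℝ) ≤ (ε / M') * (-W x) := by
        rw [div_mul_eq_mul_div, le_div_iff₀ hM']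
        calc (1:ℝ) * M' = M' := one_mul _
          _ = ε * (M' / ε) := by field_simp
          _ ≤ ε * (-W x) := by gcongr
      nlinarith [sq_nonneg (v n x)]
    have step2 : ∫ x in s, (ε / M') * ((-W x) * v n x ^ 2)
        = (ε / M') * ∫ x in s, (-W x) * v n x ^ 2 := integral_const_mul _ _
    have step3 : ∫ x in s, (-W x) * v n x ^ 2 ≤ M' := by
      refine le_trans (setIntegral_le_integral (hvW n) ?_) (hB n)
      filter_upwards with x using mul_nonneg (by linarith [hWc x]) (sq_nonneg _)
    calc ∫ x in s, v n x ^ 2 ≤ (ε / M') * ∫ x in s, (-W x) * v n x ^ 2 := by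
          rw [← step2]; exact step1
      _ ≤ (ε / M') * M' := by gcongr
      _ = ε := by field_simp
  -- subsequence converging at every rational
  obtain ⟨φ, hφ, L, hLconv⟩ : ∃ φ : ℕ → ℕ, StrictMono φ ∧ ∃ L : ℚ → ℝ,
      ∀ q : ℚ, Tendsto (fun n => v (φ n) (q:ℝ)) atTop (𝓝 (L q)) := by
    haveI : CompactSpace (Set.Icc (-C) C) := isCompact_iff_compactSpace.mp isCompact_Icc
    set F : ℕ → (ℚ → Set.Icc (-C) C) :=
      fun n q => ⟨v n q, Set.mem_Icc.2 (abs_le.1 (hpt n q))⟩ with hF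
    obtain ⟨L, φ, hφ, hconv⟩ := CompactSpace.tendsto_subseq F
    refine ⟨φ, hφ, fun q => (L q : ℝ), fun q => ?_⟩
    have h1 : Tendsto (fun n => F (φ n) q) atTop (𝓝 (L q)) :=
      ((continuous_apply q).tendsto L).comp hconv
    exact (continuous_subtype_val.tendsto (L q)).comp h1
  -- limit function
  obtain ⟨g, hg, hgmeas, hgbd⟩ :=
    aux_limit (fun n => v (φ n)) (fun n => (hdiff (φ n)).continuous) C M' hM'
      (fun n x => hpt (φ n) x) (fun n _ _ hxy => hHol (φ n) hxy)
      (fun q => (hLconv q).cauchySeq)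
  have hfinal := aux_final (fun n => v (φ n)) (fun n => (hdiff (φ n)).continuous)
    (fun n => hsq (φ n)) (M' / c) (by positivity) (fun n => hL2 (φ n))
    C hCnn (fun n x => hpt (φ n) x)
    (fun ε hε => (htail ε hε).imp fun R hR => ⟨hR.1, fun n => hR.2 (φ n)⟩)
    g hgmeas hg hgbd
  exact ⟨φ, hφ, g, hfinal.1, hfinal.2⟩
end

section
/- Define W(x) = -(x^{10} - x^8 + x^6 - (43/8) x^4 + (105/64) x^2) and φ(x) = exp(-(3/16) x² + (1/8) x⁴ - (1/6) x⁶). Then -φ''(x) - W(x) φ(x) = (3/8) φ(x) for all x ∈ ℝ. -/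
noncomputable def phiAux : ℝ → ℝ := fun x =>
  Real.exp (-(3 / 16) * x ^ 2 + (1 / 8) * x ^ 4 - (1 / 6) * x ^ 6)

lemma hasDerivAt_phiAux (x : ℝ) :
    HasDerivAt phiAux ((-(3 / 8) * x + (1 / 2) * x ^ 3 - x ^ 5) * phiAux x) x := by
  have hp : HasDerivAt (fun x : ℝ => -(3 / 16) * x ^ 2 + (1 / 8) * x ^ 4 - (1 / 6) * x ^ 6)
      (-(3 / 8) * x + (1 / 2) * x ^ 3 - x ^ 5) x := by
    have := (((hasDerivAt_pow 2 x).const_mul (-(3/16) : ℝ)).add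
      ((hasDerivAt_pow 4 x).const_mul ((1/8) : ℝ))).sub
      ((hasDerivAt_pow 6 x).const_mul ((1/6) : ℝ))
    exact this.congr_deriv (by ring)
  have := hp.exp
  refine this.congr_deriv ?_
  simp only [phiAux]
  ring

lemma deriv_phiAux : deriv phiAux = fun x => (-(3 / 8) * x + (1 / 2) * x ^ 3 - x ^ 5) * phiAux x := by
  funext x
  exact (hasDerivAt_phiAux x).deriv

lemma hasDerivAt_deriv_phiAux (x : ℝ) :
    HasDerivAt (deriv phiAux)
      ((-(3 / 8) + (3 / 2) * x ^ 2 - 5 * x ^ 4) * phiAux x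
        + (-(3 / 8) * x + (1 / 2) * x ^ 3 - x ^ 5) ^ 2 * phiAux x) x := by
  rw [deriv_phiAux]
  have hq : HasDerivAt (fun x : ℝ => -(3 / 8) * x + (1 / 2) * x ^ 3 - x ^ 5)
      (-(3 / 8) + (3 / 2) * x ^ 2 - 5 * x ^ 4) x := by
    have := (((hasDerivAt_id x).const_mul (-(3/8) : ℝ)).add
      ((hasDerivAt_pow 3 x).const_mul ((1/2) : ℝ))).sub (hasDerivAt_pow 5 x)
    exact this.congr_deriv (by ring)
  have := hq.mul (hasDerivAt_phiAux x)
  exact this.congr_deriv (by ring)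

theorem decic_potential_ground_state :
    let W : ℝ → ℝ := fun x =>
      -(x ^ 10 - x ^ 8 + x ^ 6 - (43 / 8) * x ^ 4 + (105 / 64) * x ^ 2)
    let φ : ℝ → ℝ := fun x =>
      Real.exp (-(3 / 16) * x ^ 2 + (1 / 8) * x ^ 4 - (1 / 6) * x ^ 6)
    ∀ x : ℝ, -(deriv (deriv φ) x) - W x * φ x = (3 / 8) * φ x := by
  intro W φ x
  have hφ : φ = phiAux := rfl
  rw [hφ, (hasDerivAt_deriv_phiAux x).deriv]
  show -(_) - W x * phiAux x = _
  simp only [W]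
  ring
end

section
/- Let B > 0 and C ≥ 0. Define W(x) = -( (B²/4)(sinh x - C/B)² - B cosh x ) and φ(x) = (e^{x/2} - (1/B)(C - √(B² + C²)) e^{-x/2}) · exp((C/2) x - (B/2) cosh x). Then -φ''(x) - W(x) φ(x) = λ φ(x) for all x ∈ ℝ, where λ = -(1/2)√(B² + C²) - 1/4. -/
theorem hyperbolic_potential_eigenfunction (B C : ℝ) (hB : 0 < B) (hC : 0 ≤ C) :
    let W : ℝ → ℝ := fun x =>
      -((B ^ 2 / 4) * (Real.sinh x - C / B) ^ 2 - B * Real.cosh x)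
    let φ : ℝ → ℝ := fun x =>
      (Real.exp (x / 2) - (1 / B) * (C - Real.sqrt (B ^ 2 + C ^ 2)) * Real.exp (-x / 2)) *
        Real.exp ((C / 2) * x - (B / 2) * Real.cosh x)
    ∀ x : ℝ, -(deriv (deriv φ) x) - W x * φ x =
      (-(1 / 2) * Real.sqrt (B ^ 2 + C ^ 2) - 1 / 4) * φ x := by
  intro W φ x
  have hB' : B ≠ 0 := ne_of_gt hB
  set s := Real.sqrt (B ^ 2 + C ^ 2) with hs_def
  have hs : s ^ 2 = B ^ 2 + C ^ 2 := Real.sq_sqrt (by positivity)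
  obtain ⟨k, hk⟩ : ∃ k : ℝ, B * k = C - s := ⟨(C - s) / B, by field_simp⟩
  have hkeq : 1 / B * (C - s) = k := by field_simp [mul_comm, hk]; linarith
  have hk2 : C * k + B + s * k = 0 := by
    have h0 : B * (C * k + B + s * k) = B * 0 := by
      linear_combination (C + s) * hk - hs
    exact mul_left_cancel₀ hB' h0
  have hφeq : φ = fun t =>
      (Real.exp (t / 2) - k * Real.exp (-t / 2)) *
        Real.exp ((C / 2) * t - (B / 2) * Real.cosh t) := by
    funext t
    rw [show φ t = (Real.exp (t / 2) - 1 / B * (C - s) * Real.exp (-t / 2)) *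
        Real.exp ((C / 2) * t - (B / 2) * Real.cosh t) from rfl, hkeq]
  -- basic derivative facts
  have ea : ∀ y : ℝ, HasDerivAt (fun t : ℝ => Real.exp (t / 2)) ((1/2) * Real.exp (y / 2)) y := by
    intro y
    simpa [mul_comm] using ((hasDerivAt_id y).div_const 2).exp
  have eb : ∀ y : ℝ, HasDerivAt (fun t : ℝ => Real.exp (-t / 2)) (-(1/2) * Real.exp (-y / 2)) y := by
    intro y
    have := (((hasDerivAt_id y).neg).div_const 2).exp
    refine this.congr_deriv ?_
    change Real.exp (-y / 2) * (-1 / 2) = _; ring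
  have hg : ∀ y : ℝ, HasDerivAt (fun t : ℝ => (C / 2) * t - (B / 2) * Real.cosh t)
      (C / 2 - (B / 2) * Real.sinh y) y := by
    intro y
    have h1 : HasDerivAt (fun t : ℝ => (C / 2) * t) (C / 2) y := by
      simpa using (hasDerivAt_id y).const_mul (C / 2)
    exact h1.sub ((Real.hasDerivAt_cosh y).const_mul (B / 2))
  have hf : ∀ y : ℝ, HasDerivAt (fun t : ℝ => Real.exp (t / 2) - k * Real.exp (-t / 2))
      ((1/2) * Real.exp (y / 2) + (k/2) * Real.exp (-y / 2)) y := by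
    intro y
    have := (ea y).sub ((eb y).const_mul k)
    refine this.congr_deriv ?_
    ring
  -- first derivative of φ
  set F : ℝ → ℝ := fun y =>
    ((1/2) * Real.exp (y / 2) + (k/2) * Real.exp (-y / 2) +
      (Real.exp (y / 2) - k * Real.exp (-y / 2)) * (C / 2 - (B / 2) * Real.sinh y)) *
      Real.exp ((C / 2) * y - (B / 2) * Real.cosh y) with hF_def
  have hφ' : ∀ y : ℝ, HasDerivAt φ (F y) y := by
    intro y
    rw [hφeq]
    have := (hf y).mul ((hg y).exp)
    refine this.congr_deriv ?_
    simp only [hF_def]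
    ring
  have hd1 : deriv φ = F := funext fun y => (hφ' y).deriv
  -- second derivative
  have hh : HasDerivAt (fun y : ℝ =>
      (1/2) * Real.exp (y / 2) + (k/2) * Real.exp (-y / 2) +
        (Real.exp (y / 2) - k * Real.exp (-y / 2)) * (C / 2 - (B / 2) * Real.sinh y))
      ((1/4) * Real.exp (x / 2) - (k/4) * Real.exp (-x / 2) +
        (((1/2) * Real.exp (x / 2) + (k/2) * Real.exp (-x / 2)) * (C / 2 - (B / 2) * Real.sinh x) +
          (Real.exp (x / 2) - k * Real.exp (-x / 2)) * (-(B / 2) * Real.cosh x))) x := by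
    have h1 := ((ea x).const_mul (1/2)).add ((eb x).const_mul (k/2))
    have h2 : HasDerivAt (fun t : ℝ => C / 2 - (B / 2) * Real.sinh t) (-(B/2) * Real.cosh x) x := by
      have := (hasDerivAt_const x (C/2)).sub ((Real.hasDerivAt_sinh x).const_mul (B/2))
      refine this.congr_deriv ?_; ring
    have := h1.add ((hf x).mul h2)
    refine this.congr_deriv ?_
    ring
  have hF' : HasDerivAt F
      (((1/4) * Real.exp (x / 2) - (k/4) * Real.exp (-x / 2) +
        (((1/2) * Real.exp (x / 2) + (k/2) * Real.exp (-x / 2)) * (C / 2 - (B / 2) * Real.sinh x) +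
          (Real.exp (x / 2) - k * Real.exp (-x / 2)) * (-(B / 2) * Real.cosh x)) +
        ((1/2) * Real.exp (x / 2) + (k/2) * Real.exp (-x / 2) +
          (Real.exp (x / 2) - k * Real.exp (-x / 2)) * (C / 2 - (B / 2) * Real.sinh x)) *
          (C / 2 - (B / 2) * Real.sinh x)) *
        Real.exp ((C / 2) * x - (B / 2) * Real.cosh x)) x := by
    have := hh.mul ((hg x).exp)
    refine this.congr_deriv ?_
    ring
  rw [hd1, hF'.deriv, hφeq]
  -- now pure algebra
  simp only [W]
  have hab : Real.exp (x / 2) * Real.exp (-x / 2) = 1 := by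
    rw [← Real.exp_add]; ring_nf; exact Real.exp_zero
  have hcosh : Real.cosh x =
      (Real.exp (x/2) * Real.exp (x/2) + Real.exp (-x/2) * Real.exp (-x/2)) / 2 := by
    rw [Real.cosh_eq, ← Real.exp_add, ← Real.exp_add]; ring_nf
  have hsinh : Real.sinh x =
      (Real.exp (x/2) * Real.exp (x/2) - Real.exp (-x/2) * Real.exp (-x/2)) / 2 := by
    rw [Real.sinh_eq, ← Real.exp_add, ← Real.exp_add]; ring_nf
  have hW2 : (B ^ 2 / 4) * (Real.sinh x - C / B) ^ 2 =
      (B ^ 2 * (Real.sinh x) ^ 2 - 2 * B * C * Real.sinh x + C ^ 2) / 4 := by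
    field_simp; ring
  set E := Real.exp ((C / 2) * x - (B / 2) * Real.cosh x) with hE
  rw [hW2, hcosh, hsinh]
  set a := Real.exp (x / 2)
  set b := Real.exp (-x / 2)
  linear_combination (-(B/2) * (b - k*a) * E) * hab + ((a/2) * E) * hk + (-(b/2) * E) * hk2
end
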